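/- Energy identity for the full discretization dG(q)–cG(r). Let q ≥ 0 be an integer, l ∈ ℝ, and let U = (U₁,U₂) ∈ 𝒱_{h,q} satisfy B(U,V) = L̂(V) for all V ∈ 𝒱_{h,q}. Then ‖U_{1,N}^−‖_{h,l+1}² + ‖U_{2,N}^−‖_{h,l}² + Σ_{n=0}^{N−1} ( ‖[U₁]_n‖_{h,l+1}² + ‖[U₂]_n‖_{h,l}² ) = ‖u_{h,0}‖_{h,l+1}² + ‖v_{h,0}‖_{h,l}² + 2 ∫₀^T ( a(P_k R_h f₁(t), A_h^l U₁(t)) + (P_k P_h f₂(t), A_h^l U₂(t)) ) dt. -/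

import Mathlib

noncomputable section

open scoped RealInnerProductSpace BigOperators
open MeasureTheory

/-- Squared fractional-order norm `‖v‖_α² = Σ_k λ_k^α (v,φ_k)²`. -/
def hsNormSq {H : Type*} [NormedAddCommGroup H] [InnerProductSpace ℝ H]
    (φ : ℕ → H) (lam : ℕ → ℝ) (α : ℝ) (v : H) : ℝ :=
  ∑' k, lam k ^ α * ⟪v, φ k⟫ ^ 2

/-- Fractional-order norm `‖v‖_α`. -/
def hsNorm {H : Type*} [NormedAddCommGroup H] [InnerProductSpace ℝ H]
    (φ : ℕ → H) (lam : ℕ → ℝ) (α : ℝ) (v : H) : ℝ :=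
  Real.sqrt (hsNormSq φ lam α v)

/-- Membership in the fractional-order space `Ḣ^α`. -/
def MemHs {H : Type*} [NormedAddCommGroup H] [InnerProductSpace ℝ H]
    (φ : ℕ → H) (lam : ℕ → ℝ) (α : ℝ) (v : H) : Prop :=
  Summable (fun k => lam k ^ α * ⟪v, φ k⟫ ^ 2)

/-- Weighted spectral pairing `Σ_k λ_k^l (u,φ_k)(v,φ_k)`.
`aPow φ lam 1 u v = a(u,v)`, `aPow φ lam (l+1) u v = a(u, A^l v)` and
`aPow φ lam l u v = (u, A^l v)`. -/
def aPow {H : Type*} [NormedAddCommGroup H] [InnerProductSpace ℝ H]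
    (φ : ℕ → H) (lam : ℕ → ℝ) (l : ℝ) (u v : H) : ℝ :=
  ∑' k, lam k ^ l * ⟪u, φ k⟫ * ⟪v, φ k⟫

/-- The energy bilinear form `a(u,v) = Σ_k λ_k (u,φ_k)(v,φ_k)`. -/
def aForm {H : Type*} [NormedAddCommGroup H] [InnerProductSpace ℝ H]
    (φ : ℕ → H) (lam : ℕ → ℝ) (u v : H) : ℝ :=
  aPow φ lam 1 u v

/-- The operator `A`, determined by `A φ_k = λ_k φ_k`. -/
def Aop {H : Type*} [NormedAddCommGroup H] [InnerProductSpace ℝ H]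
    (φ : ℕ → H) (lam : ℕ → ℝ) (v : H) : H :=
  ∑' k, (lam k * ⟪v, φ k⟫) • φ k

/-- Value at time `s` of the polynomial of degree ≤ q (with coefficients `c n ·`)
attached to the `n`-th time subinterval. -/
def pval {H : Type*} [NormedAddCommGroup H] [InnerProductSpace ℝ H]
    (q : ℕ) (c : ℕ → ℕ → H) (n : ℕ) (s : ℝ) : H :=
  ∑ j ∈ Finset.range (q + 1), s ^ j • c n j

/-- Time derivative of `pval`. -/
def pderiv {H : Type*} [NormedAddCommGroup H] [InnerProductSpace ℝ H]
    (q : ℕ) (c : ℕ → ℕ → H) (n : ℕ) (s : ℝ) : H :=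
  ∑ j ∈ Finset.range (q + 1), ((j : ℝ) * s ^ (j - 1)) • c n j

/-- The dG bilinear form `B((u₁,u₂),(v₁,v₂))`, where the piecewise polynomials
`u₁, u₂, v₁, v₂` are described by their coefficient families `c1, c2, d1, d2`
(on the mesh `0 = tt 0 < tt 1 < ⋯ < tt N`). -/
def Bform {H : Type*} [NormedAddCommGroup H] [InnerProductSpace ℝ H]
    (φ : ℕ → H) (lam : ℕ → ℝ) (tt : ℕ → ℝ) (N q : ℕ)
    (c1 c2 d1 d2 : ℕ → ℕ → H) : ℝ :=
  (∑ n ∈ Finset.Icc 1 N, ∫ s in tt (n-1)..tt n,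
      (aForm φ lam (pderiv q c1 n s) (pval q d1 n s)
        - aForm φ lam (pval q c2 n s) (pval q d1 n s)
        + ⟪pderiv q c2 n s, pval q d2 n s⟫
        + aForm φ lam (pval q c1 n s) (pval q d2 n s)))
  + (∑ n ∈ Finset.Icc 1 (N-1),
      (aForm φ lam (pval q c1 (n+1) (tt n) - pval q c1 n (tt n)) (pval q d1 (n+1) (tt n))
        + ⟪pval q c2 (n+1) (tt n) - pval q c2 n (tt n), pval q d2 (n+1) (tt n)⟫))
  + aForm φ lam (pval q c1 1 (tt 0)) (pval q d1 1 (tt 0))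
  + ⟪pval q c2 1 (tt 0), pval q d2 1 (tt 0)⟫

/-- Supremum of `g` over the open interval `(a,b)`. -/
def supIoo (g : ℝ → ℝ) (a b : ℝ) : ℝ :=
  sSup (g '' Set.Ioo a b)

/-- Squared discrete fractional norm `‖v‖_{h,s}² = ‖A_h^{s/2} v‖²`, expressed through
an orthonormal eigenbasis `e` of `A_h` on `S_h` with eigenvalues `μ`. -/
def hNormSqh {H : Type*} [NormedAddCommGroup H] [InnerProductSpace ℝ H]
    {m : ℕ} (e : Fin m → H) (μ : Fin m → ℝ) (s : ℝ) (v : H) : ℝ :=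
  ∑ i, μ i ^ s * ⟪v, e i⟫ ^ 2

/-- Discrete fractional norm `‖v‖_{h,s}`. -/
def hNormh {H : Type*} [NormedAddCommGroup H] [InnerProductSpace ℝ H]
    {m : ℕ} (e : Fin m → H) (μ : Fin m → ℝ) (s : ℝ) (v : H) : ℝ :=
  Real.sqrt (hNormSqh e μ s v)

/-- Discrete weighted pairing: `aPowh e μ (l+1) u v = a(u, A_h^l v)` and
`aPowh e μ l u v = (u, A_h^l v)` for `u, v ∈ S_h`. -/
def aPowh {H : Type*} [NormedAddCommGroup H] [InnerProductSpace ℝ H]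
    {m : ℕ} (e : Fin m → H) (μ : Fin m → ℝ) (l : ℝ) (u v : H) : ℝ :=
  ∑ i, μ i ^ l * ⟪u, e i⟫ * ⟪v, e i⟫


section AuxReal

lemma summable_w_mul (w a b : ℕ → ℝ) (hw : ∀ k, 0 ≤ w k)
    (hA : Summable fun k => w k * a k ^ 2) (hB : Summable fun k => w k * b k ^ 2) :
    Summable fun k => w k * a k * b k := by
  refine Summable.of_abs (Summable.of_nonneg_of_le (fun k => abs_nonneg _)
    (fun k => ?_) ((hA.add hB).div_const 2))
  have h1 : |w k * a k * b k| = w k * |a k| * |b k| := by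
    rw [abs_mul, abs_mul, abs_of_nonneg (hw k)]
  rw [h1]
  have h2 : w k * |a k| * |b k| ≤ (w k * |a k|^2 + w k * |b k|^2)/2 := by
    nlinarith [mul_nonneg (hw k) (sq_nonneg (|a k| - |b k|))]
  rw [sq_abs, sq_abs] at h2
  exact h2

lemma tsum_cauchy_schwarz (w a b : ℕ → ℝ) (hw : ∀ k, 0 ≤ w k)
    (hA : Summable fun k => w k * a k ^ 2) (hB : Summable fun k => w k * b k ^ 2) :
    (∑' k, w k * a k * b k) ^ 2 ≤ (∑' k, w k * a k ^ 2) * (∑' k, w k * b k ^ 2) := by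
  have hCs := summable_w_mul w a b hw hA hB
  have key : ∀ t : ℝ, 0 ≤ (∑' k, w k * b k ^ 2) * (t * t)
      + (2 * ∑' k, w k * a k * b k) * t + (∑' k, w k * a k ^ 2) := by
    intro t
    have h1 : ∀ k, (w k * b k ^ 2) * (t*t) + (2*(w k * a k * b k))*t + w k * a k^2
        = w k * (a k + t * b k)^2 := fun k => by ring
    have hb1 : Summable fun k => (w k * b k ^ 2) * (t*t) := hB.mul_right _
    have hb2 : Summable fun k => (2*(w k * a k * b k))*t := (hCs.mul_left 2).mul_right t
    calc (0:ℝ) ≤ ∑' k, w k * (a k + t * b k)^2 :=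
          tsum_nonneg fun k => mul_nonneg (hw k) (sq_nonneg _)
    _ = ∑' k, ((w k * b k ^2) * (t*t) + ((2*(w k * a k * b k))*t + w k * a k^2)) :=
          tsum_congr fun k => by rw [← h1 k]; ring
    _ = _ := by
        rw [Summable.tsum_add hb1 (hb2.add hA), Summable.tsum_add hb2 hA, tsum_mul_right, tsum_mul_right,
          tsum_mul_left]
        ring
  have hd := discrim_le_zero key
  unfold discrim at hd
  nlinarith [hd]

lemma telescope_sum (f g : ℕ → ℝ) : ∀ N, 1 ≤ N →
    (∑ n ∈ Finset.Icc 1 N, (f n - g n)) + ∑ n ∈ Finset.Icc 1 (N-1), (g (n+1) - f n)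
      = f N - g 1 := by
  intro N
  induction N with
  | zero => intro h; exact absurd h (by norm_num)
  | succ N ih =>
    intro _
    by_cases hN0 : N = 0
    · subst hN0; simp
    · have h1 : 1 ≤ N := Nat.one_le_iff_ne_zero.mpr hN0
      have e1 : ∑ n ∈ Finset.Icc 1 (N+1), (f n - g n)
          = ∑ n ∈ Finset.Icc 1 N, (f n - g n) + (f (N+1) - g (N+1)) :=
        Finset.sum_Icc_succ_top (by omega) _
      have e3 : ∑ n ∈ Finset.Icc 1 N, (g (n+1) - f n)
          = ∑ n ∈ Finset.Icc 1 (N-1), (g (n+1) - f n) + (g (N+1) - f N) := by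
        calc ∑ n ∈ Finset.Icc 1 N, (g (n+1) - f n)
            = ∑ n ∈ Finset.Icc 1 ((N-1)+1), (g (n+1) - f n) := by
              rw [Nat.sub_add_cancel h1]
        _ = ∑ n ∈ Finset.Icc 1 (N-1), (g (n+1) - f n) + (g ((N-1)+1+1) - f ((N-1)+1)) :=
              Finset.sum_Icc_succ_top (by omega) _
        _ = _ := by rw [Nat.sub_add_cancel h1]
      have e2 : N + 1 - 1 = N := rfl
      rw [e2, e1, e3]
      have := ih h1
      linarith
end AuxReal

section AForm
variable {H : Type*} [NormedAddCommGroup H] [InnerProductSpace ℝ H]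
variable (φ : ℕ → H) (lam : ℕ → ℝ)

lemma aForm_def (u v : H) : aForm φ lam u v = ∑' k, lam k * ⟪u, φ k⟫ * ⟪v, φ k⟫ := by
  unfold aForm aPow; simp only [Real.rpow_one]

lemma memHs_one_summable {v : H} (hv : MemHs φ lam 1 v) :
    Summable fun k => lam k * ⟪v, φ k⟫ ^ 2 := by
  unfold MemHs at hv; simpa only [Real.rpow_one] using hv

lemma aForm_summable (hlam : ∀ k, 0 ≤ lam k) {u v : H}
    (hu : MemHs φ lam 1 u) (hv : MemHs φ lam 1 v) :
    Summable fun k => lam k * ⟪u, φ k⟫ * ⟪v, φ k⟫ :=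
  summable_w_mul lam _ _ hlam (memHs_one_summable φ lam hu) (memHs_one_summable φ lam hv)

lemma aForm_symm (u v : H) : aForm φ lam u v = aForm φ lam v u := by
  unfold aForm aPow; exact tsum_congr fun k => by ring

lemma hsNormSq_one_nonneg (hlam : ∀ k, 0 ≤ lam k) (v : H) : 0 ≤ hsNormSq φ lam 1 v :=
  tsum_nonneg fun k => mul_nonneg (Real.rpow_nonneg (hlam k) _) (sq_nonneg _)

lemma aForm_abs_le (hlam : ∀ k, 0 ≤ lam k) {u v : H}
    (hu : MemHs φ lam 1 u) (hv : MemHs φ lam 1 v) :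
    |aForm φ lam u v| ≤ hsNorm φ lam 1 u * hsNorm φ lam 1 v := by
  have hcs := tsum_cauchy_schwarz lam (fun k => ⟪u, φ k⟫) (fun k => ⟪v, φ k⟫) hlam
    (memHs_one_summable φ lam hu) (memHs_one_summable φ lam hv)
  have hA : hsNormSq φ lam 1 u = ∑' k, lam k * ⟪u, φ k⟫ ^ 2 := by
    unfold hsNormSq; simp only [Real.rpow_one]
  have hB : hsNormSq φ lam 1 v = ∑' k, lam k * ⟪v, φ k⟫ ^ 2 := by
    unfold hsNormSq; simp only [Real.rpow_one]
  have hAnn := hsNormSq_one_nonneg φ lam hlam u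
  rw [aForm_def]
  unfold hsNorm
  rw [← Real.sqrt_mul (by rw [hA]; exact hA ▸ hAnn)]
  calc |∑' k, lam k * ⟪u, φ k⟫ * ⟪v, φ k⟫|
      = Real.sqrt ((∑' k, lam k * ⟪u, φ k⟫ * ⟪v, φ k⟫)^2) := (Real.sqrt_sq_eq_abs _).symm
  _ ≤ Real.sqrt (hsNormSq φ lam 1 u * hsNormSq φ lam 1 v) := by
      apply Real.sqrt_le_sqrt; rw [hA, hB]; exact hcs

lemma aForm_add_left (hlam : ∀ k, 0 ≤ lam k) {u u' v : H}
    (hu : MemHs φ lam 1 u) (hu' : MemHs φ lam 1 u') (hv : MemHs φ lam 1 v) :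
    aForm φ lam (u + u') v = aForm φ lam u v + aForm φ lam u' v := by
  rw [aForm_def, aForm_def, aForm_def,
    ← Summable.tsum_add (aForm_summable φ lam hlam hu hv) (aForm_summable φ lam hlam hu' hv)]
  exact tsum_congr fun k => by rw [inner_add_left]; ring

lemma aForm_smul_left (r : ℝ) (u v : H) : aForm φ lam (r • u) v = r * aForm φ lam u v := by
  rw [aForm_def, aForm_def, ← tsum_mul_left]
  exact tsum_congr fun k => by rw [real_inner_smul_left]; ring

lemma MemHs.sub' {α : ℝ} (hlam : ∀ k, 0 ≤ lam k) {u v : H}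
    (hu : MemHs φ lam α u) (hv : MemHs φ lam α v) : MemHs φ lam α (u - v) := by
  unfold MemHs at *
  refine Summable.of_nonneg_of_le
    (fun k => mul_nonneg (Real.rpow_nonneg (hlam k) _) (sq_nonneg _))
    (fun k => ?_) (((hu.add hv)).mul_left 2)
  rw [inner_sub_left]
  have hwnn := Real.rpow_nonneg (hlam k) α
  nlinarith [mul_nonneg hwnn (sq_nonneg (⟪u, φ k⟫ + ⟪v, φ k⟫))]

lemma MemHs.smul' {α : ℝ} (r : ℝ) {u : H} (hu : MemHs φ lam α u) : MemHs φ lam α (r • u) := by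
  unfold MemHs at *
  refine Summable.congr (hu.mul_left (r^2)) fun k => ?_
  rw [real_inner_smul_left]; ring

lemma aForm_sum_left (hlam : ∀ k, 0 ≤ lam k) {ι : Type*} (s : Finset ι) (u : ι → H) (v : H)
    (hu : ∀ i ∈ s, MemHs φ lam 1 (u i)) (hv : MemHs φ lam 1 v) :
    aForm φ lam (∑ i ∈ s, u i) v = ∑ i ∈ s, aForm φ lam (u i) v := by
  classical
  induction s using Finset.induction with
  | empty => simp [aForm_def]
  | @insert a s ha ih =>
    have hmem : MemHs φ lam 1 (∑ i ∈ s, u i) := by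
      have : ∀ (t : Finset ι), (∀ i ∈ t, MemHs φ lam 1 (u i)) → MemHs φ lam 1 (∑ i ∈ t, u i) := by
        intro t
        induction t using Finset.induction with
        | empty => intro _; unfold MemHs; simp only [Finset.sum_empty, inner_zero_left, ne_eq,
            OfNat.ofNat_ne_zero, not_false_eq_true, zero_pow, mul_zero]; exact summable_zero
        | @insert b t hb iht =>
          intro h
          rw [Finset.sum_insert hb, show (u b + ∑ i ∈ t, u i) = u b - (-(∑ i ∈ t, u i)) by abel]
          refine MemHs.sub' φ lam hlam (h b (Finset.mem_insert_self _ _)) ?_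
          rw [show (-(∑ i ∈ t, u i)) = (-1 : ℝ) • (∑ i ∈ t, u i) by simp]
          exact MemHs.smul' φ lam _ (iht fun i hi => h i (Finset.mem_insert_of_mem hi))
      exact this s fun i hi => hu i (Finset.mem_insert_of_mem hi)
    rw [Finset.sum_insert ha, Finset.sum_insert ha,
      aForm_add_left φ lam hlam (hu a (Finset.mem_insert_self _ _)) hmem hv,
      ih fun i hi => hu i (Finset.mem_insert_of_mem hi)]

lemma inner_pval (q : ℕ) (c : ℕ → ℕ → H) (n : ℕ) (s : ℝ) (w : H) :
    ⟪pval q c n s, w⟫ = ∑ j ∈ Finset.range (q+1), ⟪c n j, w⟫ * s ^ j := by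
  unfold pval; rw [sum_inner]
  exact Finset.sum_congr rfl fun j _ => by rw [real_inner_smul_left]; ring

lemma inner_pderiv (q : ℕ) (c : ℕ → ℕ → H) (n : ℕ) (s : ℝ) (w : H) :
    ⟪pderiv q c n s, w⟫ = ∑ j ∈ Finset.range (q+1), ⟪c n j, w⟫ * ((j:ℝ) * s ^ (j-1)) := by
  unfold pderiv; rw [sum_inner]
  exact Finset.sum_congr rfl fun j _ => by rw [real_inner_smul_left]; ring

lemma continuous_pval (q : ℕ) (c : ℕ → ℕ → H) (n : ℕ) : Continuous fun s => pval q c n s := by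
  unfold pval
  exact continuous_finset_sum _ fun j _ => (continuous_pow j).smul continuous_const

lemma continuous_pderiv (q : ℕ) (c : ℕ → ℕ → H) (n : ℕ) :
    Continuous fun s => pderiv q c n s := by
  unfold pderiv
  exact continuous_finset_sum _ fun j _ =>
    (continuous_const.mul (continuous_pow (j-1))).smul continuous_const

lemma hasDerivAt_inner_pval (q : ℕ) (c : ℕ → ℕ → H) (n : ℕ) (w : H) (s : ℝ) :
    HasDerivAt (fun t => ⟪pval q c n t, w⟫) ⟪pderiv q c n s, w⟫ s := by
  rw [inner_pderiv]
  have hfe : (fun t => ⟪pval q c n t, w⟫)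
      = fun t => ∑ j ∈ Finset.range (q+1), ⟪c n j, w⟫ * t ^ j :=
    funext fun t => inner_pval q c n t w
  rw [hfe]
  exact HasDerivAt.fun_sum fun j _ => (hasDerivAt_pow j s).const_mul _

lemma integral_pderiv_mul_pval (q : ℕ) (c : ℕ → ℕ → H) (n : ℕ) (a b : ℝ) (w : H) :
    ∫ s in a..b, ⟪pderiv q c n s, w⟫ * ⟪pval q c n s, w⟫
      = (⟪pval q c n b, w⟫^2 - ⟪pval q c n a, w⟫^2) / 2 := by
  have hder : ∀ s ∈ Set.uIcc a b,
      HasDerivAt (fun t => ⟪pval q c n t, w⟫^2 / 2)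
        (⟪pderiv q c n s, w⟫ * ⟪pval q c n s, w⟫) s := by
    intro s _
    have h := ((hasDerivAt_inner_pval q c n w s).pow 2).div_const 2
    have he : ⟪pderiv q c n s, w⟫ * ⟪pval q c n s, w⟫
        = (↑2 * ⟪pval q c n s, w⟫ ^ (2-1) * ⟪pderiv q c n s, w⟫) / 2 := by
      norm_num; ring
    rw [he]; exact h
  have hcont : Continuous fun s => ⟪pderiv q c n s, w⟫ * ⟪pval q c n s, w⟫ :=
    ((continuous_pderiv q c n).inner continuous_const).mul
      ((continuous_pval q c n).inner continuous_const)
  rw [intervalIntegral.integral_eq_sub_of_hasDerivAt hder (hcont.intervalIntegrable a b)]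
  ring

end AForm

section APowh
variable {H : Type*} [NormedAddCommGroup H] [InnerProductSpace ℝ H]
variable {m : ℕ} (e : Fin m → H) (μ : Fin m → ℝ)

lemma aPowh_comm (L : ℝ) (u v : H) : aPowh e μ L u v = aPowh e μ L v u :=
  Finset.sum_congr rfl fun i _ => by ring

lemma aPowh_self (L : ℝ) (v : H) : aPowh e μ L v v = hNormSqh e μ L v :=
  Finset.sum_congr rfl fun i _ => by ring

lemma jump_identity (L : ℝ) (u v : H) :
    aPowh e μ L (u - v) u
      = (hNormSqh e μ L (u - v) + hNormSqh e μ L u - hNormSqh e μ L v) / 2 := by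
  unfold aPowh hNormSqh
  rw [show (∑ i, μ i ^ L * ⟪u - v, e i⟫ * ⟪u, e i⟫)
      = ∑ i, ((μ i ^ L * ⟪u - v, e i⟫^2 + μ i ^ L * ⟪u, e i⟫^2 - μ i ^ L * ⟪v, e i⟫^2)/2)
      from Finset.sum_congr rfl fun i _ => by rw [inner_sub_left]; ring]
  rw [← Finset.sum_div, Finset.sum_sub_distrib, Finset.sum_add_distrib]

lemma hNormSqh_sub (L : ℝ) (u w : H) :
    hNormSqh e μ L (u - w)
      = hNormSqh e μ L u - 2 * aPowh e μ L w u + hNormSqh e μ L w := by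
  unfold hNormSqh aPowh
  rw [show (∑ i, μ i ^ L * ⟪u - w, e i⟫ ^ 2)
      = ∑ i, ((μ i ^ L * ⟪u, e i⟫^2 - 2 * (μ i ^ L * ⟪w, e i⟫ * ⟪u, e i⟫)) + μ i ^ L * ⟪w, e i⟫^2)
      from Finset.sum_congr rfl fun i _ => by rw [inner_sub_left]; ring]
  rw [Finset.sum_add_distrib, Finset.sum_sub_distrib, Finset.mul_sum]

end APowh

lemma IntervalIntegrable.clm_comp {E F : Type*} [NormedAddCommGroup E] [NormedSpace ℝ E]
    [NormedAddCommGroup F] [NormedSpace ℝ F] {f : ℝ → E} {a b : ℝ}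
    {ν : MeasureTheory.Measure ℝ}
    (L : E →L[ℝ] F) (hf : IntervalIntegrable f ν a b) :
    IntervalIntegrable (fun x => L (f x)) ν a b :=
  ⟨L.integrable_comp hf.1, L.integrable_comp hf.2⟩

/-- **Energy identity for the full discretization dG(q)–cG(r).**
`S` plays the role of `S_h`; `e, μ` is an orthonormal eigenbasis of the discrete
operator `A_h` on `S_h` with (positive) eigenvalues `μ`, through which all the discrete
norms `‖·‖_{h,s} = ‖A_h^{s/2}·‖` and pairings `a(·,A_h^l·)`, `(·,A_h^l·)` are expressed. -/
theorem dGcG_energy_identity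
    {H : Type*} [NormedAddCommGroup H] [InnerProductSpace ℝ H] [CompleteSpace H]
    (φ : ℕ → H) (lam : ℕ → ℝ)
    (hφ : Orthonormal ℝ φ)
    (hφtotal : (Submodule.span ℝ (Set.range φ)).topologicalClosure = ⊤)
    (hlam_pos : ∀ k, 0 < lam k) (hlam_mono : Monotone lam)
    (hlam_top : Filter.Tendsto lam Filter.atTop Filter.atTop)
    (q : ℕ) (l : ℝ)
    -- the temporal mesh 0 = t₀ < t₁ < ⋯ < t_N = T
    (T : ℝ) (hT : 0 < T) (N : ℕ) (hN : 1 ≤ N)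
    (tt : ℕ → ℝ) (ht0 : tt 0 = 0) (htN : tt N = T)
    (htmono : ∀ n < N, tt n < tt (n + 1))
    -- the finite element space S_h ⊂ V
    (S : Submodule ℝ H) (hSfin : FiniteDimensional ℝ S)
    (hSV : ∀ v ∈ S, MemHs φ lam 1 v)
    -- orthonormal eigenbasis of A_h on S_h: (A_h eᵢ, w) = a(eᵢ,w) = μᵢ (eᵢ,w)
    (m : ℕ) (e : Fin m → H) (μ : Fin m → ℝ)
    (he_on : Orthonormal ℝ e) (he_mem : ∀ i, e i ∈ S)
    (he_span : ∀ v ∈ S, v = ∑ i, ⟪v, e i⟫ • e i)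
    (hμ_pos : ∀ i, 0 < μ i)
    (heig : ∀ i, ∀ w ∈ S, aForm φ lam (e i) w = μ i * ⟪e i, w⟫)
    -- Ritz projection R_h and L₂-projection P_h
    (Rh Ph : H → H)
    (hRh_mem : ∀ v, Rh v ∈ S)
    (hRh : ∀ v, MemHs φ lam 1 v → ∀ χ ∈ S, aForm φ lam (Rh v - v) χ = 0)
    (hPh_mem : ∀ v, Ph v ∈ S)
    (hPh : ∀ v, ∀ χ ∈ S, ⟪Ph v - v, χ⟫ = 0)
    -- the data
    (f1 f2 : ℝ → H) (uh0 vh0 : H) (huh0 : uh0 ∈ S) (hvh0 : vh0 ∈ S)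
    (hf1meas : AEStronglyMeasurable f1 volume)
    (hf2meas : AEStronglyMeasurable f2 volume)
    (hf1mem : ∀ t, MemHs φ lam 1 (f1 t))
    (hf1int : IntervalIntegrable (fun t => hsNorm φ lam 1 (f1 t)) volume 0 T)
    (hf2int : IntervalIntegrable f2 volume 0 T)
    -- U = (U₁,U₂) ∈ 𝒱_{h,q}
    (c1 c2 : ℕ → ℕ → H)
    (hc1S : ∀ n j, c1 n j ∈ S) (hc2S : ∀ n j, c2 n j ∈ S)
    -- B(U,V) = L̂(V) for every V = (V₁,V₂) ∈ 𝒱_{h,q}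
    (hU : ∀ d1 d2 : ℕ → ℕ → H, (∀ n j, d1 n j ∈ S) → (∀ n j, d2 n j ∈ S) →
      Bform φ lam tt N q c1 c2 d1 d2 =
        (∑ n ∈ Finset.Icc 1 N, ∫ s in tt (n-1)..tt n,
            (aForm φ lam (f1 s) (pval q d1 n s) + ⟪f2 s, pval q d2 n s⟫))
          + aForm φ lam uh0 (pval q d1 1 (tt 0)) + ⟪vh0, pval q d2 1 (tt 0)⟫)
    -- P_k R_h f₁ and P_k P_h f₂
    (Pk1 Pk2 : ℕ → ℕ → H)
    (hPk1S : ∀ n j, Pk1 n j ∈ S) (hPk2S : ∀ n j, Pk2 n j ∈ S)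
    (hPk1 : ∀ n ∈ Finset.Icc 1 N, ∀ j ∈ Finset.range (q+1),
      (∫ s in tt (n-1)..tt n, (s ^ j) • (pval q Pk1 n s - Rh (f1 s))) = 0)
    (hPk2 : ∀ n ∈ Finset.Icc 1 N, ∀ j ∈ Finset.range (q+1),
      (∫ s in tt (n-1)..tt n, (s ^ j) • (pval q Pk2 n s - Ph (f2 s))) = 0) :
    hNormSqh e μ (l+1) (pval q c1 N (tt N))
      + hNormSqh e μ l (pval q c2 N (tt N))
      + ((hNormSqh e μ (l+1) (pval q c1 1 (tt 0) - uh0)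
            + hNormSqh e μ l (pval q c2 1 (tt 0) - vh0))
          + ∑ n ∈ Finset.Icc 1 (N-1),
              (hNormSqh e μ (l+1) (pval q c1 (n+1) (tt n) - pval q c1 n (tt n))
                + hNormSqh e μ l (pval q c2 (n+1) (tt n) - pval q c2 n (tt n))))
      = hNormSqh e μ (l+1) uh0 + hNormSqh e μ l vh0
        + 2 * ∑ n ∈ Finset.Icc 1 N, ∫ s in tt (n-1)..tt n,
            (aPowh e μ (l+1) (pval q Pk1 n s) (pval q c1 n s)
              + aPowh e μ l (pval q Pk2 n s) (pval q c2 n s)) := by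
    classical
  have hlamnn : ∀ k, 0 ≤ lam k := fun k => (hlam_pos k).le
  have hμne : ∀ i, μ i ≠ 0 := fun i => ne_of_gt (hμ_pos i)
  have hee : ∀ i j, ⟪e i, e j⟫ = if i = j then (1:ℝ) else 0 := orthonormal_iff_ite.mp he_on
  have heS : ∀ i, MemHs φ lam 1 (e i) := fun i => hSV _ (he_mem i)
  have httle : ∀ a b : ℕ, a ≤ b → b ≤ N → tt a ≤ tt b := by
    intro a b hab hbN
    induction b with
    | zero => simp [Nat.le_zero.mp hab]
    | succ b ih =>
      rcases Nat.lt_or_ge a (b+1) with h | h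
      · exact (ih (Nat.lt_succ_iff.mp h) (le_trans (Nat.le_succ b) hbN)).trans
          (htmono b (by omega)).le
      · have hx : a = b + 1 := le_antisymm hab h
        simp [hx]
  have hpvalS : ∀ (c : ℕ → ℕ → H), (∀ n j, c n j ∈ S) → ∀ n s, pval q c n s ∈ S :=
    fun c hc n s => Submodule.sum_mem _ fun j _ => Submodule.smul_mem _ _ (hc n j)
  have hpderivS : ∀ (c : ℕ → ℕ → H), (∀ n j, c n j ∈ S) → ∀ n s, pderiv q c n s ∈ S :=
    fun c hc n s => Submodule.sum_mem _ fun j _ => Submodule.smul_mem _ _ (hc n j)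
  set Al : H → H := fun v => ∑ i, (μ i ^ l * ⟪v, e i⟫) • e i with hAldef
  have hAl_mem : ∀ v, Al v ∈ S := fun v =>
    Submodule.sum_mem _ fun i _ => Submodule.smul_mem _ _ (he_mem i)
  have hAl_inner : ∀ (v : H) (j : Fin m), ⟪Al v, e j⟫ = μ j ^ l * ⟪v, e j⟫ := by
    intro v j
    simp only [hAldef]
    rw [sum_inner]
    simp [real_inner_smul_left, hee]
  have hAl_pval : ∀ (c : ℕ → ℕ → H) (n : ℕ) (s : ℝ),
      pval q (fun n j => Al (c n j)) n s = Al (pval q c n s) := by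
    intro c n s
    simp only [hAldef]
    unfold pval
    simp only [sum_inner, real_inner_smul_left, Finset.smul_sum, smul_smul, Finset.mul_sum]
    rw [Finset.sum_comm]
    refine Finset.sum_congr rfl fun i _ => ?_
    rw [← Finset.sum_smul]
    congr 1
    exact Finset.sum_congr rfl fun j _ => by ring
  have hAl_pderiv : ∀ (c : ℕ → ℕ → H) (n : ℕ) (s : ℝ),
      pderiv q (fun n j => Al (c n j)) n s = Al (pderiv q c n s) := by
    intro c n s
    simp only [hAldef]
    unfold pderiv
    simp only [sum_inner, real_inner_smul_left, Finset.smul_sum, smul_smul, Finset.mul_sum]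
    rw [Finset.sum_comm]
    refine Finset.sum_congr rfl fun i _ => ?_
    rw [← Finset.sum_smul]
    congr 1
    exact Finset.sum_congr rfl fun j _ => by ring
  have haForm_S : ∀ u, u ∈ S → ∀ w, w ∈ S →
      aForm φ lam u w = ∑ i, μ i * ⟪u, e i⟫ * ⟪w, e i⟫ := by
    intro u hu w hw
    conv_lhs => rw [he_span u hu]
    rw [aForm_sum_left φ lam hlamnn _ _ w
      (fun i _ => MemHs.smul' φ lam _ (heS i)) (hSV w hw)]
    refine Finset.sum_congr rfl fun i _ => ?_
    rw [aForm_smul_left, heig i w hw, real_inner_comm (e i) w]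
    ring
  have hinner_Al : ∀ u v : H, ⟪u, Al v⟫ = aPowh e μ l u v := by
    intro u v
    simp only [hAldef]
    unfold aPowh
    rw [inner_sum]
    refine Finset.sum_congr rfl fun i _ => ?_
    rw [real_inner_smul_right]
    ring
  have haForm_Al : ∀ u, u ∈ S → ∀ v : H, aForm φ lam u (Al v) = aPowh e μ (l+1) u v := by
    intro u hu v
    rw [haForm_S u hu (Al v) (hAl_mem v)]
    unfold aPowh
    refine Finset.sum_congr rfl fun i _ => ?_
    rw [hAl_inner, Real.rpow_add_one (hμne i) l]
    ring
  have hRitz : ∀ v, MemHs φ lam 1 v → ∀ χ ∈ S, aForm φ lam v χ = aForm φ lam (Rh v) χ := by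
    intro v hv χ hχ
    have h2 := hRh v hv χ hχ
    have hsub : MemHs φ lam 1 (Rh v - v) := MemHs.sub' φ lam hlamnn (hSV _ (hRh_mem v)) hv
    have h3 : aForm φ lam ((Rh v - v) + v) χ
        = aForm φ lam (Rh v - v) χ + aForm φ lam v χ :=
      aForm_add_left φ lam hlamnn hsub hv (hSV χ hχ)
    rw [sub_add_cancel] at h3
    rw [h3, h2, zero_add]
  have hPh' : ∀ (v χ : H), χ ∈ S → ⟪v, χ⟫ = ⟪Ph v, χ⟫ := by
    intro v χ hχ
    have h := hPh v χ hχ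
    rw [inner_sub_left] at h
    linarith
  have hRh_repr : ∀ v, MemHs φ lam 1 v →
      Rh v = ∑ i, ((μ i)⁻¹ * aForm φ lam v (e i)) • e i := by
    intro v hv
    conv_lhs => rw [he_span (Rh v) (hRh_mem v)]
    refine Finset.sum_congr rfl fun i _ => ?_
    have h1 : aForm φ lam v (e i) = μ i * ⟪Rh v, e i⟫ := by
      rw [hRitz v hv (e i) (he_mem i), aForm_symm, heig i (Rh v) (hRh_mem v),
        real_inner_comm (e i) (Rh v)]
    congr 1
    rw [h1, ← mul_assoc, inv_mul_cancel₀ (hμne i), one_mul]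
  have hcoefmeas : ∀ i : Fin m,
      AEStronglyMeasurable (fun s => aForm φ lam (f1 s) (e i)) volume := by
    intro i
    have hsummand : ∀ k : ℕ,
        AEStronglyMeasurable (fun s => lam k * ⟪f1 s, φ k⟫ * ⟪e i, φ k⟫) volume := fun k =>
      ((hf1meas.inner aestronglyMeasurable_const).const_mul (lam k)).mul_const _
    have heq : ∀ s, aForm φ lam (f1 s) (e i) = ∑' k, lam k * ⟪f1 s, φ k⟫ * ⟪e i, φ k⟫ :=
      fun s => aForm_def φ lam _ _
    refine aestronglyMeasurable_of_tendsto_ae Filter.atTop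
      (f := fun K s => ∑ k ∈ Finset.range K, lam k * ⟪f1 s, φ k⟫ * ⟪e i, φ k⟫)
      (fun K => Finset.aestronglyMeasurable_fun_sum _ fun k _ => hsummand k)
      (Filter.Eventually.of_forall fun s => ?_)
    rw [heq s]
    exact (aForm_summable φ lam hlamnn (hf1mem s) (heS i)).hasSum.tendsto_sum_nat
  have hRhmeas : AEStronglyMeasurable (fun s => Rh (f1 s)) volume := by
    have hrepr : (fun s => Rh (f1 s))
        = fun s => ∑ i, ((μ i)⁻¹ * aForm φ lam (f1 s) (e i)) • e i :=
      funext fun s => hRh_repr _ (hf1mem s)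
    rw [hrepr]
    exact Finset.aestronglyMeasurable_fun_sum _ fun i _ =>
      ((hcoefmeas i).const_mul _).smul aestronglyMeasurable_const
  have hnormSq_e : ∀ i, hsNormSq φ lam 1 (e i) = μ i := by
    intro i
    have h1 : hsNormSq φ lam 1 (e i) = aForm φ lam (e i) (e i) := by
      rw [aForm_def]; unfold hsNormSq
      simp only [Real.rpow_one]
      exact tsum_congr fun k => by ring
    rw [h1, heig i (e i) (he_mem i)]
    simp [hee i i, he_on.1 i]
  set C0 : ℝ := ∑ i, (μ i)⁻¹ * Real.sqrt (μ i) with hC0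
  have hRhbound : ∀ s, ‖Rh (f1 s)‖ ≤ C0 * hsNorm φ lam 1 (f1 s) := by
    intro s
    rw [hRh_repr _ (hf1mem s), hC0, Finset.sum_mul]
    refine (norm_sum_le _ _).trans (Finset.sum_le_sum fun i _ => ?_)
    rw [norm_smul, Real.norm_eq_abs, he_on.1 i, mul_one, abs_mul,
      abs_of_nonneg (inv_nonneg.mpr (hμ_pos i).le)]
    have hb := aForm_abs_le φ lam hlamnn (hf1mem s) (heS i)
    have he1 : hsNorm φ lam 1 (e i) = Real.sqrt (μ i) := by
      unfold hsNorm; rw [hnormSq_e i]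
    rw [he1] at hb
    calc (μ i)⁻¹ * |aForm φ lam (f1 s) (e i)|
        ≤ (μ i)⁻¹ * (hsNorm φ lam 1 (f1 s) * Real.sqrt (μ i)) :=
          mul_le_mul_of_nonneg_left hb (inv_nonneg.mpr (hμ_pos i).le)
    _ = (μ i)⁻¹ * Real.sqrt (μ i) * hsNorm φ lam 1 (f1 s) := by ring
  set d1 : ℕ → ℕ → H := fun n j => Al (c1 n j) with hd1def
  set d2 : ℕ → ℕ → H := fun n j => Al (c2 n j) with hd2def
  have hU' := hU d1 d2 (fun n j => hAl_mem _) (fun n j => hAl_mem _)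
  set Pfun : ℕ → ℝ → ℝ := fun n t =>
    hNormSqh e μ (l+1) (pval q c1 n t) + hNormSqh e μ l (pval q c2 n t) with hPfun
  have hBint : ∀ n : ℕ,
      (∫ s in tt (n-1)..tt n,
        (aForm φ lam (pderiv q c1 n s) (pval q d1 n s)
          - aForm φ lam (pval q c2 n s) (pval q d1 n s)
          + ⟪pderiv q c2 n s, pval q d2 n s⟫
          + aForm φ lam (pval q c1 n s) (pval q d2 n s)))
      = (Pfun n (tt n) - Pfun n (tt (n-1))) / 2 := by
    intro n
    have hcancel : ∀ a x c : ℝ, a - x + c + x = a + c := fun a x c => by ring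
    have hint : ∀ s : ℝ,
        aForm φ lam (pderiv q c1 n s) (pval q d1 n s)
          - aForm φ lam (pval q c2 n s) (pval q d1 n s)
          + ⟪pderiv q c2 n s, pval q d2 n s⟫
          + aForm φ lam (pval q c1 n s) (pval q d2 n s)
        = ∑ i, (μ i ^ (l+1) * ⟪pderiv q c1 n s, e i⟫ * ⟪pval q c1 n s, e i⟫
            + μ i ^ l * ⟪pderiv q c2 n s, e i⟫ * ⟪pval q c2 n s, e i⟫) := by
      intro s
      rw [hd1def, hd2def, hAl_pval, hAl_pval,
        haForm_Al _ (hpderivS c1 hc1S n s), haForm_Al _ (hpvalS c2 hc2S n s),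
        hinner_Al, haForm_Al _ (hpvalS c1 hc1S n s),
        aPowh_comm e μ (l+1) (pval q c2 n s) (pval q c1 n s), hcancel]
      unfold aPowh
      rw [← Finset.sum_add_distrib]
    have hcont1 : ∀ i : Fin m, Continuous
        fun s => ⟪pderiv q c1 n s, e i⟫ * ⟪pval q c1 n s, e i⟫ := fun i =>
      ((continuous_pderiv q c1 n).inner continuous_const).mul
        ((continuous_pval q c1 n).inner continuous_const)
    have hcont2 : ∀ i : Fin m, Continuous
        fun s => ⟪pderiv q c2 n s, e i⟫ * ⟪pval q c2 n s, e i⟫ := fun i =>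
      ((continuous_pderiv q c2 n).inner continuous_const).mul
        ((continuous_pval q c2 n).inner continuous_const)
    rw [intervalIntegral.integral_congr (g := fun s =>
        ∑ i, (μ i ^ (l+1) * ⟪pderiv q c1 n s, e i⟫ * ⟪pval q c1 n s, e i⟫
          + μ i ^ l * ⟪pderiv q c2 n s, e i⟫ * ⟪pval q c2 n s, e i⟫))
        (fun s _ => hint s)]
    rw [intervalIntegral.integral_finset_sum (fun i _ =>
      (((continuous_const.mul ((continuous_pderiv q c1 n).inner continuous_const)).mul
          ((continuous_pval q c1 n).inner continuous_const)).add
        ((continuous_const.mul ((continuous_pderiv q c2 n).inner continuous_const)).mul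
          ((continuous_pval q c2 n).inner continuous_const))).intervalIntegrable _ _)]
    have hper : ∀ i : Fin m, (∫ s in tt (n-1)..tt n,
        (μ i ^ (l+1) * ⟪pderiv q c1 n s, e i⟫ * ⟪pval q c1 n s, e i⟫
          + μ i ^ l * ⟪pderiv q c2 n s, e i⟫ * ⟪pval q c2 n s, e i⟫))
        = μ i ^ (l+1) * ((⟪pval q c1 n (tt n), e i⟫^2 - ⟪pval q c1 n (tt (n-1)), e i⟫^2)/2)
          + μ i ^ l * ((⟪pval q c2 n (tt n), e i⟫^2 - ⟪pval q c2 n (tt (n-1)), e i⟫^2)/2) := by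
      intro i
      have e1 : ∀ s:ℝ, μ i ^ (l+1) * ⟪pderiv q c1 n s, e i⟫ * ⟪pval q c1 n s, e i⟫
          + μ i ^ l * ⟪pderiv q c2 n s, e i⟫ * ⟪pval q c2 n s, e i⟫
          = μ i ^ (l+1) * (⟪pderiv q c1 n s, e i⟫ * ⟪pval q c1 n s, e i⟫)
            + μ i ^ l * (⟪pderiv q c2 n s, e i⟫ * ⟪pval q c2 n s, e i⟫) := fun s => by ring
      rw [intervalIntegral.integral_congr (fun s _ => e1 s),
        intervalIntegral.integral_add ((continuous_const.fun_mul (hcont1 i)).intervalIntegrable _ _)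
          ((continuous_const.fun_mul (hcont2 i)).intervalIntegrable _ _),
        intervalIntegral.integral_const_mul, intervalIntegral.integral_const_mul,
        integral_pderiv_mul_pval, integral_pderiv_mul_pval]
    rw [Finset.sum_congr rfl fun i _ => hper i]
    simp only [hPfun]
    unfold hNormSqh
    rw [← Finset.sum_add_distrib, ← Finset.sum_add_distrib, ← Finset.sum_sub_distrib,
      Finset.sum_div]
    exact Finset.sum_congr rfl fun i _ => by ring
  have hBjump : ∀ n : ℕ,
      (aForm φ lam (pval q c1 (n+1) (tt n) - pval q c1 n (tt n)) (pval q d1 (n+1) (tt n))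
        + ⟪pval q c2 (n+1) (tt n) - pval q c2 n (tt n), pval q d2 (n+1) (tt n)⟫)
      = ((hNormSqh e μ (l+1) (pval q c1 (n+1) (tt n) - pval q c1 n (tt n))
          + hNormSqh e μ l (pval q c2 (n+1) (tt n) - pval q c2 n (tt n)))
        + (Pfun (n+1) (tt n) - Pfun n (tt n))) / 2 := by
    intro n
    rw [hd1def, hd2def, hAl_pval, hAl_pval,
      haForm_Al _ (Submodule.sub_mem _ (hpvalS c1 hc1S _ _) (hpvalS c1 hc1S _ _)),
      hinner_Al, jump_identity, jump_identity]
    simp only [hPfun]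
    ring
  have hRint : ∀ n ∈ Finset.Icc 1 N,
      (∫ s in tt (n-1)..tt n,
        (aForm φ lam (f1 s) (pval q d1 n s) + ⟪f2 s, pval q d2 n s⟫))
      = ∫ s in tt (n-1)..tt n,
          (aPowh e μ (l+1) (pval q Pk1 n s) (pval q c1 n s)
            + aPowh e μ l (pval q Pk2 n s) (pval q c2 n s)) := by
    intro n hn
    obtain ⟨hn1, hnN⟩ := Finset.mem_Icc.mp hn
    have han : tt (n-1) ≤ tt n := httle _ _ (Nat.sub_le n 1) hnN
    have hsubset : Set.uIcc (tt (n-1)) (tt n) ⊆ Set.uIcc 0 T := by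
      rw [Set.uIcc_of_le han, Set.uIcc_of_le hT.le]
      refine Set.Icc_subset_Icc ?_ ?_
      · rw [← ht0]; exact httle 0 (n-1) (Nat.zero_le _) (le_trans (Nat.sub_le n 1) hnN)
      · rw [← htN]; exact httle n N hnN le_rfl
    have hIntRh : ∀ (i : Fin m) (g : ℝ → ℝ), Continuous g →
        IntervalIntegrable (fun s => g s * ⟪Rh (f1 s), e i⟫) volume (tt (n-1)) (tt n) := by
      intro i g hg
      have hb : IntervalIntegrable (fun s => g s * (C0 * hsNorm φ lam 1 (f1 s)))
          volume (tt (n-1)) (tt n) :=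
        ((hf1int.mono_set hsubset).const_mul C0).continuousOn_mul hg.continuousOn
      refine hb.mono_fun ((hg.aestronglyMeasurable.mul
        (hRhmeas.inner aestronglyMeasurable_const)).restrict) (ae_of_all _ fun s => ?_)
      have h1 : |⟪Rh (f1 s), e i⟫| ≤ C0 * hsNorm φ lam 1 (f1 s) := by
        refine (abs_real_inner_le_norm _ _).trans ?_
        rw [he_on.1 i, mul_one]
        exact hRhbound s
      have h2 : (0:ℝ) ≤ C0 * hsNorm φ lam 1 (f1 s) := le_trans (abs_nonneg _) h1
      show ‖g s * ⟪Rh (f1 s), e i⟫‖ ≤ ‖g s * (C0 * hsNorm φ lam 1 (f1 s))‖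
      rw [Real.norm_eq_abs, Real.norm_eq_abs, abs_mul, abs_mul]
      exact mul_le_mul_of_nonneg_left (by rw [abs_of_nonneg h2]; exact h1) (abs_nonneg _)
    have hIntf2 : ∀ (i : Fin m) (g : ℝ → ℝ), Continuous g →
        IntervalIntegrable (fun s => g s * ⟪Ph (f2 s), e i⟫) volume (tt (n-1)) (tt n) := by
      intro i g hg
      have he2 : (fun s => g s * ⟪Ph (f2 s), e i⟫) = fun s => g s * ⟪e i, f2 s⟫ :=
        funext fun s => by
          rw [← hPh' (f2 s) (e i) (he_mem i), real_inner_comm]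
      rw [he2]
      have h3 : IntervalIntegrable (fun s => ⟪e i, f2 s⟫) volume (tt (n-1)) (tt n) := by
        have h4 := IntervalIntegrable.clm_comp (innerSL ℝ (e i)) (hf2int.mono_set hsubset)
        simpa only [innerSL_apply_apply] using h4
      exact h3.continuousOn_mul hg.continuousOn
    have hPh_repr : ∀ v : H, Ph v = ∑ i, ⟪v, e i⟫ • e i := by
      intro v
      conv_lhs => rw [he_span (Ph v) (hPh_mem v)]
      exact Finset.sum_congr rfl fun i _ => by rw [← hPh' v (e i) (he_mem i)]
    have hPhmeas : AEStronglyMeasurable (fun s => Ph (f2 s)) volume := by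
      have hrepr : (fun s => Ph (f2 s)) = fun s => ∑ i, ⟪f2 s, e i⟫ • e i :=
        funext fun s => hPh_repr (f2 s)
      rw [hrepr]
      exact Finset.aestronglyMeasurable_fun_sum _ fun i _ =>
        (hf2meas.inner aestronglyMeasurable_const).smul aestronglyMeasurable_const
    have hPhbound : ∀ v : H, ‖Ph v‖ ≤ (m:ℝ) * ‖v‖ := by
      intro v
      rw [hPh_repr v]
      refine (norm_sum_le _ _).trans ?_
      have hterm : ∀ i : Fin m, i ∈ Finset.univ → ‖⟪v, e i⟫ • e i‖ ≤ ‖v‖ := by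
        intro i _
        rw [norm_smul, Real.norm_eq_abs, he_on.1 i, mul_one]
        refine (abs_real_inner_le_norm _ _).trans ?_
        rw [he_on.1 i, mul_one]
      refine (Finset.sum_le_sum hterm).trans ?_
      rw [Finset.sum_const, Finset.card_univ, Fintype.card_fin, nsmul_eq_mul]
    have hIntVec1 : ∀ j : ℕ, IntervalIntegrable
        (fun s => (s:ℝ)^j • (pval q Pk1 n s - Rh (f1 s))) volume (tt (n-1)) (tt n) := by
      intro j
      have hbnd : IntervalIntegrable
          (fun s => |s|^j * (‖pval q Pk1 n s‖ + C0 * hsNorm φ lam 1 (f1 s)))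
          volume (tt (n-1)) (tt n) :=
        (((continuous_pval q Pk1 n).norm.intervalIntegrable _ _).add
          ((hf1int.mono_set hsubset).const_mul C0)).continuousOn_mul
          ((continuous_abs.pow j).continuousOn)
      refine hbnd.mono_fun (((continuous_pow j).aestronglyMeasurable.smul
        ((continuous_pval q Pk1 n).aestronglyMeasurable.sub hRhmeas)).restrict)
        (ae_of_all _ fun s => ?_)
      have h1 : ‖pval q Pk1 n s - Rh (f1 s)‖ ≤ ‖pval q Pk1 n s‖ + C0 * hsNorm φ lam 1 (f1 s) :=
        (norm_sub_le _ _).trans (add_le_add_right (hRhbound s) _)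
      calc ‖(s:ℝ)^j • (pval q Pk1 n s - Rh (f1 s))‖
          = |s|^j * ‖pval q Pk1 n s - Rh (f1 s)‖ := by
            rw [norm_smul, Real.norm_eq_abs, abs_pow]
      _ ≤ |s|^j * (‖pval q Pk1 n s‖ + C0 * hsNorm φ lam 1 (f1 s)) :=
            mul_le_mul_of_nonneg_left h1 (by positivity)
      _ ≤ ‖|s|^j * (‖pval q Pk1 n s‖ + C0 * hsNorm φ lam 1 (f1 s))‖ := by
            rw [Real.norm_eq_abs]; exact le_abs_self _
    have hIntVec2 : ∀ j : ℕ, IntervalIntegrable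
        (fun s => (s:ℝ)^j • (pval q Pk2 n s - Ph (f2 s))) volume (tt (n-1)) (tt n) := by
      intro j
      have hbnd : IntervalIntegrable
          (fun s => |s|^j * (‖pval q Pk2 n s‖ + (m:ℝ) * ‖f2 s‖)) volume (tt (n-1)) (tt n) :=
        (((continuous_pval q Pk2 n).norm.intervalIntegrable _ _).add
          (((hf2int.mono_set hsubset).norm).const_mul (m:ℝ))).continuousOn_mul
          ((continuous_abs.pow j).continuousOn)
      refine hbnd.mono_fun (((continuous_pow j).aestronglyMeasurable.smul
        ((continuous_pval q Pk2 n).aestronglyMeasurable.sub hPhmeas)).restrict)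
        (ae_of_all _ fun s => ?_)
      have h1 : ‖pval q Pk2 n s - Ph (f2 s)‖ ≤ ‖pval q Pk2 n s‖ + (m:ℝ) * ‖f2 s‖ :=
        (norm_sub_le _ _).trans (add_le_add_right (hPhbound (f2 s)) _)
      calc ‖(s:ℝ)^j • (pval q Pk2 n s - Ph (f2 s))‖
          = |s|^j * ‖pval q Pk2 n s - Ph (f2 s)‖ := by
            rw [norm_smul, Real.norm_eq_abs, abs_pow]
      _ ≤ |s|^j * (‖pval q Pk2 n s‖ + (m:ℝ) * ‖f2 s‖) :=
            mul_le_mul_of_nonneg_left h1 (by positivity)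
      _ ≤ ‖|s|^j * (‖pval q Pk2 n s‖ + (m:ℝ) * ‖f2 s‖)‖ := by
            rw [Real.norm_eq_abs]; exact le_abs_self _
    have hzero1 : ∀ j ∈ Finset.range (q+1), ∀ i : Fin m,
        (∫ s in tt (n-1)..tt n, (s:ℝ)^j * (⟪pval q Pk1 n s, e i⟫ - ⟪Rh (f1 s), e i⟫)) = 0 := by
      intro j hj i
      have h1 := ContinuousLinearMap.intervalIntegral_comp_comm (innerSL ℝ (e i)) (hIntVec1 j)
      rw [hPk1 n hn j hj, map_zero] at h1
      rw [← h1]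
      refine intervalIntegral.integral_congr fun s _ => ?_
      simp only [innerSL_apply_apply, real_inner_smul_right, inner_sub_right]
      rw [real_inner_comm (e i) (pval q Pk1 n s), real_inner_comm (e i) (Rh (f1 s))]
    have hzero2 : ∀ j ∈ Finset.range (q+1), ∀ i : Fin m,
        (∫ s in tt (n-1)..tt n, (s:ℝ)^j * (⟪pval q Pk2 n s, e i⟫ - ⟪Ph (f2 s), e i⟫)) = 0 := by
      intro j hj i
      have h1 := ContinuousLinearMap.intervalIntegral_comp_comm (innerSL ℝ (e i)) (hIntVec2 j)
      rw [hPk2 n hn j hj, map_zero] at h1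
      rw [← h1]
      refine intervalIntegral.integral_congr fun s _ => ?_
      simp only [innerSL_apply_apply, real_inner_smul_right, inner_sub_right]
      rw [real_inner_comm (e i) (pval q Pk2 n s), real_inner_comm (e i) (Ph (f2 s))]
    have hclaim1 : ∀ i : Fin m,
        (∫ s in tt (n-1)..tt n, ⟪pval q c1 n s, e i⟫ * ⟪Rh (f1 s), e i⟫)
          = ∫ s in tt (n-1)..tt n, ⟪pval q c1 n s, e i⟫ * ⟪pval q Pk1 n s, e i⟫ := by
      intro i
      have hx : Continuous fun s => ⟪pval q c1 n s, e i⟫ :=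
        (continuous_pval q c1 n).inner continuous_const
      have h2 : IntervalIntegrable (fun s => ⟪pval q c1 n s, e i⟫ * ⟪pval q Pk1 n s, e i⟫)
          volume (tt (n-1)) (tt n) :=
        (hx.mul ((continuous_pval q Pk1 n).inner continuous_const)).intervalIntegrable _ _
      have h1 := hIntRh i _ hx
      have hII_j : ∀ j : ℕ, IntervalIntegrable
          (fun s => (s:ℝ)^j * (⟪pval q Pk1 n s, e i⟫ - ⟪Rh (f1 s), e i⟫))
          volume (tt (n-1)) (tt n) := by
        intro j
        have hfe : (fun s => (s:ℝ)^j * ⟪pval q Pk1 n s, e i⟫ - (s:ℝ)^j * ⟪Rh (f1 s), e i⟫)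
            = fun s => (s:ℝ)^j * (⟪pval q Pk1 n s, e i⟫ - ⟪Rh (f1 s), e i⟫) :=
          funext fun s => (mul_sub _ _ _).symm
        rw [← hfe]
        exact (((continuous_pow j).mul ((continuous_pval q Pk1 n).inner
          continuous_const)).intervalIntegrable _ _).sub (hIntRh i _ (continuous_pow j))
      have hdiff0 : (∫ s in tt (n-1)..tt n,
          (⟪pval q c1 n s, e i⟫ * ⟪pval q Pk1 n s, e i⟫
            - ⟪pval q c1 n s, e i⟫ * ⟪Rh (f1 s), e i⟫)) = 0 := by
        have hptw : ∀ s : ℝ, ⟪pval q c1 n s, e i⟫ * ⟪pval q Pk1 n s, e i⟫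
            - ⟪pval q c1 n s, e i⟫ * ⟪Rh (f1 s), e i⟫
            = ∑ j ∈ Finset.range (q+1),
                ⟪c1 n j, e i⟫ * ((s:ℝ)^j * (⟪pval q Pk1 n s, e i⟫ - ⟪Rh (f1 s), e i⟫)) := by
          intro s
          rw [← mul_sub, inner_pval q c1 n s (e i), Finset.sum_mul]
          exact Finset.sum_congr rfl fun j _ => by ring
        rw [intervalIntegral.integral_congr (fun s _ => hptw s),
          intervalIntegral.integral_finset_sum (fun j _ => (hII_j j).const_mul _)]
        refine Finset.sum_eq_zero fun j hj => ?_
        rw [intervalIntegral.integral_const_mul, hzero1 j hj i, mul_zero]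
      rw [intervalIntegral.integral_sub h2 h1] at hdiff0
      linarith
    have hclaim2 : ∀ i : Fin m,
        (∫ s in tt (n-1)..tt n, ⟪pval q c2 n s, e i⟫ * ⟪Ph (f2 s), e i⟫)
          = ∫ s in tt (n-1)..tt n, ⟪pval q c2 n s, e i⟫ * ⟪pval q Pk2 n s, e i⟫ := by
      intro i
      have hx : Continuous fun s => ⟪pval q c2 n s, e i⟫ :=
        (continuous_pval q c2 n).inner continuous_const
      have h2 : IntervalIntegrable (fun s => ⟪pval q c2 n s, e i⟫ * ⟪pval q Pk2 n s, e i⟫)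
          volume (tt (n-1)) (tt n) :=
        (hx.mul ((continuous_pval q Pk2 n).inner continuous_const)).intervalIntegrable _ _
      have h1 := hIntf2 i _ hx
      have hII_j : ∀ j : ℕ, IntervalIntegrable
          (fun s => (s:ℝ)^j * (⟪pval q Pk2 n s, e i⟫ - ⟪Ph (f2 s), e i⟫))
          volume (tt (n-1)) (tt n) := by
        intro j
        have hfe : (fun s => (s:ℝ)^j * ⟪pval q Pk2 n s, e i⟫ - (s:ℝ)^j * ⟪Ph (f2 s), e i⟫)
            = fun s => (s:ℝ)^j * (⟪pval q Pk2 n s, e i⟫ - ⟪Ph (f2 s), e i⟫) :=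
          funext fun s => (mul_sub _ _ _).symm
        rw [← hfe]
        exact (((continuous_pow j).mul ((continuous_pval q Pk2 n).inner
          continuous_const)).intervalIntegrable _ _).sub (hIntf2 i _ (continuous_pow j))
      have hdiff0 : (∫ s in tt (n-1)..tt n,
          (⟪pval q c2 n s, e i⟫ * ⟪pval q Pk2 n s, e i⟫
            - ⟪pval q c2 n s, e i⟫ * ⟪Ph (f2 s), e i⟫)) = 0 := by
        have hptw : ∀ s : ℝ, ⟪pval q c2 n s, e i⟫ * ⟪pval q Pk2 n s, e i⟫
            - ⟪pval q c2 n s, e i⟫ * ⟪Ph (f2 s), e i⟫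
            = ∑ j ∈ Finset.range (q+1),
                ⟪c2 n j, e i⟫ * ((s:ℝ)^j * (⟪pval q Pk2 n s, e i⟫ - ⟪Ph (f2 s), e i⟫)) := by
          intro s
          rw [← mul_sub, inner_pval q c2 n s (e i), Finset.sum_mul]
          exact Finset.sum_congr rfl fun j _ => by ring
        rw [intervalIntegral.integral_congr (fun s _ => hptw s),
          intervalIntegral.integral_finset_sum (fun j _ => (hII_j j).const_mul _)]
        refine Finset.sum_eq_zero fun j hj => ?_
        rw [intervalIntegral.integral_const_mul, hzero2 j hj i, mul_zero]
      rw [intervalIntegral.integral_sub h2 h1] at hdiff0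
      linarith
    have hptA : ∀ s : ℝ, aForm φ lam (f1 s) (pval q d1 n s) + ⟪f2 s, pval q d2 n s⟫
        = ∑ i, (μ i ^ (l+1) * (⟪pval q c1 n s, e i⟫ * ⟪Rh (f1 s), e i⟫)
            + μ i ^ l * (⟪pval q c2 n s, e i⟫ * ⟪Ph (f2 s), e i⟫)) := by
      intro s
      rw [hd1def, hd2def, hAl_pval, hAl_pval,
        hRitz (f1 s) (hf1mem s) _ (hAl_mem _), haForm_Al _ (hRh_mem _), hinner_Al]
      unfold aPowh
      rw [← Finset.sum_add_distrib]
      refine Finset.sum_congr rfl fun i _ => ?_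
      rw [hPh' (f2 s) (e i) (he_mem i)]
      ring
    have hptB : ∀ s : ℝ, aPowh e μ (l+1) (pval q Pk1 n s) (pval q c1 n s)
        + aPowh e μ l (pval q Pk2 n s) (pval q c2 n s)
        = ∑ i, (μ i ^ (l+1) * (⟪pval q c1 n s, e i⟫ * ⟪pval q Pk1 n s, e i⟫)
            + μ i ^ l * (⟪pval q c2 n s, e i⟫ * ⟪pval q Pk2 n s, e i⟫)) := by
      intro s
      unfold aPowh
      rw [← Finset.sum_add_distrib]
      exact Finset.sum_congr rfl fun i _ => by ring
    rw [intervalIntegral.integral_congr (fun s _ => hptA s),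
      intervalIntegral.integral_congr (fun s _ => hptB s),
      intervalIntegral.integral_finset_sum (fun i _ =>
        ((hIntRh i _ ((continuous_pval q c1 n).inner continuous_const)).const_mul _).add
          ((hIntf2 i _ ((continuous_pval q c2 n).inner continuous_const)).const_mul _)),
      intervalIntegral.integral_finset_sum (fun i _ =>
        ((continuous_const.mul (((continuous_pval q c1 n).inner continuous_const).mul
            ((continuous_pval q Pk1 n).inner continuous_const))).add
          (continuous_const.mul (((continuous_pval q c2 n).inner continuous_const).mul
            ((continuous_pval q Pk2 n).inner continuous_const)))).intervalIntegrable _ _)]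
    refine Finset.sum_congr rfl fun i _ => ?_
    rw [intervalIntegral.integral_add
        ((hIntRh i _ ((continuous_pval q c1 n).inner continuous_const)).const_mul _)
        ((hIntf2 i _ ((continuous_pval q c2 n).inner continuous_const)).const_mul _),
      intervalIntegral.integral_add
        ((continuous_const.mul (((continuous_pval q c1 n).inner continuous_const).mul
            ((continuous_pval q Pk1 n).inner continuous_const))).intervalIntegrable _ _)
        ((continuous_const.mul (((continuous_pval q c2 n).inner continuous_const).mul
            ((continuous_pval q Pk2 n).inner continuous_const))).intervalIntegrable _ _),
      intervalIntegral.integral_const_mul, intervalIntegral.integral_const_mul,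
      intervalIntegral.integral_const_mul, intervalIntegral.integral_const_mul,
      hclaim1 i, hclaim2 i]
  have hInit1 : aForm φ lam (pval q c1 1 (tt 0)) (pval q d1 1 (tt 0))
      = hNormSqh e μ (l+1) (pval q c1 1 (tt 0)) := by
    rw [hd1def, hAl_pval, haForm_Al _ (hpvalS c1 hc1S 1 (tt 0)), aPowh_self]
  have hInit2 : ⟪pval q c2 1 (tt 0), pval q d2 1 (tt 0)⟫
      = hNormSqh e μ l (pval q c2 1 (tt 0)) := by
    rw [hd2def, hAl_pval, hinner_Al, aPowh_self]
  have hData1 : aForm φ lam uh0 (pval q d1 1 (tt 0))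
      = aPowh e μ (l+1) uh0 (pval q c1 1 (tt 0)) := by
    rw [hd1def, hAl_pval, haForm_Al _ huh0]
  have hData2 : ⟪vh0, pval q d2 1 (tt 0)⟫ = aPowh e μ l vh0 (pval q c2 1 (tt 0)) := by
    rw [hd2def, hAl_pval, hinner_Al]
  unfold Bform at hU'
  rw [Finset.sum_congr rfl (fun n _ => hBint n),
      Finset.sum_congr rfl (fun n _ => hBjump n),
      Finset.sum_congr rfl hRint,
      hInit1, hInit2, hData1, hData2, ← Finset.sum_div, ← Finset.sum_div,
      Finset.sum_add_distrib] at hU'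
  have htel := telescope_sum (fun n => Pfun n (tt n)) (fun n => Pfun n (tt (n-1))) N hN
  simp only [Nat.add_sub_cancel, Nat.sub_self] at htel
  have hJ0a := hNormSqh_sub e μ (l+1) (pval q c1 1 (tt 0)) uh0
  have hJ0b := hNormSqh_sub e μ l (pval q c2 1 (tt 0)) vh0
  have hPN : Pfun N (tt N) = hNormSqh e μ (l+1) (pval q c1 N (tt N))
      + hNormSqh e μ l (pval q c2 N (tt N)) := rfl
  have hP10 : Pfun 1 (tt 0) = hNormSqh e μ (l+1) (pval q c1 1 (tt 0))
      + hNormSqh e μ l (pval q c2 1 (tt 0)) := rfl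
  linarith [hU', htel, hJ0a, hJ0b, hPN, hP10]
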